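/- For every real x > 0, −∑_{k=1}^∞ ψ(2k) x^k / Γ(2k) = √x · [ sinh(√x)·(Chi(√x) − ln √x) − cosh(√x)·Shi(√x) ]. (This is the value (2.9) of the derivative of the integral Mittag-Leffler function with respect to α at α = 2, β = 0.) -/

import Mathlib

open scoped BigOperators

/-- The digamma function `ψ(x) = Γ'(x)/Γ(x)`. -/
noncomputable def digamma (x : ℝ) : ℝ := deriv Real.Gamma x / Real.Gamma x

/-- The hyperbolic sine integral `Shi(y) = ∫₀^y sinh t / t dt`. -/
noncomputable def Shi (y : ℝ) : ℝ := ∫ t in (0 : ℝ)..y, Real.sinh t / t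

/-- The hyperbolic cosine integral `Chi(y) = γ + ln y − ∫₀^y (1 − cosh t)/t dt`. -/
noncomputable def Chi (y : ℝ) : ℝ :=
  Real.eulerMascheroniConstant + Real.log y - ∫ t in (0 : ℝ)..y, (1 - Real.cosh t) / t


open Finset Nat MeasureTheory intervalIntegral

lemma sum_range_even_odd (f : ℕ → ℝ) (n : ℕ) :
    ∑ i ∈ range (2 * n), f i = ∑ i ∈ range n, f (2 * i) + ∑ i ∈ range n, f (2 * i + 1) := by
  induction n with
  | zero => simp
  | succ n ih =>
    have h : 2 * (n + 1) = (2 * n + 1) + 1 := by omega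
    rw [h, sum_range_succ, sum_range_succ, ih, sum_range_succ, sum_range_succ]
    ring

lemma alt_choose_sum (N : ℕ) :
    ∑ j ∈ range N, (-1 : ℝ) ^ j * (N.choose (j + 1)) / (j + 1) = (harmonic N : ℝ) := by
  induction N with
  | zero => simp
  | succ N ih =>
    have key : ∑ j ∈ range (N + 1), (-1 : ℝ) ^ j * ((N+1).choose (j + 1)) = 1 := by
      have h0 : (∑ i ∈ range (N + 2), (-1 : ℤ) ^ i * ((N+1).choose i)) = 0 :=
        Int.alternating_sum_range_choose_of_ne (Nat.succ_ne_zero N)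
      have h0' : (∑ i ∈ range (N + 2), (-1 : ℝ) ^ i * ((N+1).choose i)) = 0 := by
        exact_mod_cast congrArg (fun z : ℤ => (z : ℝ)) h0
      rw [Finset.sum_range_succ'] at h0'
      simp only [pow_succ] at h0'
      have : -(∑ j ∈ range (N + 1), (-1 : ℝ) ^ j * ((N+1).choose (j + 1))) + 1 = 0 := by
        rw [← h0']
        push_cast
        rw [← Finset.sum_neg_distrib]
        congr 1
        · apply Finset.sum_congr rfl
          intro j _
          ring
        · simp
      linarith
    have step : ∀ j, ((N.choose j : ℝ)) / (j + 1) = ((N+1).choose (j+1) : ℝ) / (N + 1) := by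
      intro j
      have h := Nat.add_one_mul_choose_eq N j
      have h' : ((N + 1) * N.choose j : ℝ) = ((N+1).choose (j+1) : ℝ) * (j + 1) := by
        exact_mod_cast congrArg (fun z : ℕ => (z : ℝ)) h
      field_simp
      linarith [h']
    calc ∑ j ∈ range (N+1), (-1 : ℝ) ^ j * ((N+1).choose (j + 1)) / (j + 1)
        = ∑ j ∈ range (N+1), ((-1 : ℝ) ^ j * (N.choose j) / (j+1)
            + (-1 : ℝ) ^ j * (N.choose (j+1)) / (j+1)) := by
          apply Finset.sum_congr rfl
          intro j _
          rw [Nat.choose_succ_succ]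
          push_cast
          ring
      _ = (∑ j ∈ range (N+1), (-1 : ℝ) ^ j * (N.choose j) / (j+1))
            + ∑ j ∈ range (N+1), (-1 : ℝ) ^ j * (N.choose (j+1)) / (j+1) := by
          rw [Finset.sum_add_distrib]
      _ = (∑ j ∈ range (N+1), (-1 : ℝ) ^ j * ((N+1).choose (j+1)) / (N+1))
            + (harmonic N : ℝ) := by
          congr 1
          · apply Finset.sum_congr rfl
            intro j _
            rw [mul_div_assoc, step j, ← mul_div_assoc]
          · rw [Finset.sum_range_succ, Nat.choose_succ_self]
            simpa using ih
      _ = (harmonic (N+1) : ℝ) := by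
          rw [← Finset.sum_div, key, harmonic_succ]
          push_cast
          ring

lemma key_comb (k : ℕ) :
    ∑ i ∈ range (k+1), (1:ℝ) / (((2*i)! * ((2*(k-i)+1) * (2*(k-i)+1)!) : ℕ))
      - ∑ i ∈ range k, (1:ℝ) / (((2*i+1)! * ((2*(k-1-i)+2) * (2*(k-1-i)+2)!) : ℕ))
    = (harmonic (2*k+1) : ℝ) / (2*k+1)! := by
  have h1 : ∑ j ∈ range (2*(k+1)), (-1 : ℝ) ^ j * ((2*k+1).choose (j + 1)) / (j + 1)
      = (harmonic (2*k+1) : ℝ) := by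
    have h2 : 2*(k+1) = (2*k+1) + 1 := by omega
    rw [h2, Finset.sum_range_succ, alt_choose_sum]
    have : (2*k+1).choose (2*k+1+1) = 0 := Nat.choose_succ_self _
    simp [this]
  rw [sum_range_even_odd] at h1
  have hodd : ∀ m : ℕ, (-1 : ℝ) ^ (2*m) = 1 := fun m => by
    rw [pow_mul]; norm_num
  have heven : ∀ m : ℕ, (-1 : ℝ) ^ (2*m+1) = -1 := fun m => by
    rw [pow_succ, pow_mul]; norm_num
  have h1' : (∑ m ∈ range (k+1), ((2*k+1).choose (2*m+1) : ℝ) / ((2*m+1 : ℕ) : ℝ))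
      - ∑ m ∈ range (k+1), ((2*k+1).choose (2*m+2) : ℝ) / ((2*m+2 : ℕ) : ℝ)
      = (harmonic (2*k+1) : ℝ) := by
    rw [← h1, sub_eq_add_neg, ← Finset.sum_neg_distrib]
    congr 1
    · exact Finset.sum_congr rfl fun m _ => by rw [hodd m]; push_cast; ring
    · exact Finset.sum_congr rfl fun m _ => by
        rw [heven m]; push_cast; ring_nf
  have h2' : ∑ m ∈ range (k+1), ((2*k+1).choose (2*m+2) : ℝ) / ((2*m+2 : ℕ) : ℝ)
      = ∑ m ∈ range k, ((2*k+1).choose (2*m+2) : ℝ) / ((2*m+2 : ℕ) : ℝ) := by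
    rw [Finset.sum_range_succ]
    have : (2*k+1).choose (2*k+2) = 0 := by
      apply Nat.choose_eq_zero_of_lt; omega
    simp [this]
  rw [h2'] at h1'
  have r1 : ∑ i ∈ range (k+1), (1:ℝ) / (((2*i)! * ((2*(k-i)+1) * (2*(k-i)+1)!) : ℕ))
      = ∑ m ∈ range (k+1), (1:ℝ) / (((2*(k-m))! * ((2*m+1) * (2*m+1)!) : ℕ)) := by
    rw [← Finset.sum_range_reflect]
    apply Finset.sum_congr rfl
    intro m hm
    simp only [Finset.mem_range] at hm
    have e1 : k + 1 - 1 - m = k - m := by omega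
    have e2 : k - (k - m) = m := by omega
    rw [e1, e2]
  have r2 : ∑ i ∈ range k, (1:ℝ) / (((2*i+1)! * ((2*(k-1-i)+2) * (2*(k-1-i)+2)!) : ℕ))
      = ∑ m ∈ range k, (1:ℝ) / (((2*(k-1-m)+1)! * ((2*m+2) * (2*m+2)!) : ℕ)) := by
    rw [← Finset.sum_range_reflect]
    apply Finset.sum_congr rfl
    intro m hm
    simp only [Finset.mem_range] at hm
    rw [show k - 1 - (k - 1 - m) = m by omega]
  rw [r1, r2, ← h1', sub_div]
  congr 1
  · rw [Finset.sum_div]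
    apply Finset.sum_congr rfl
    intro m hm
    simp only [Finset.mem_range] at hm
    have hle : 2*m+1 ≤ 2*k+1 := by omega
    have hf := Nat.choose_mul_factorial_mul_factorial hle
    rw [show 2*k+1 - (2*m+1) = 2*(k-m) by omega] at hf
    have hfR : ((2*k+1).choose (2*m+1) : ℝ) * (2*m+1)! * (2*(k-m))! = (2*k+1)! := by
      exact_mod_cast congrArg (fun z : ℕ => (z : ℝ)) hf
    rw [div_div, div_eq_div_iff (by positivity) (by positivity)]
    push_cast at hfR ⊢
    nlinarith [hfR]
  · rw [Finset.sum_div]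
    apply Finset.sum_congr rfl
    intro m hm
    simp only [Finset.mem_range] at hm
    have hle : 2*m+2 ≤ 2*k+1 := by omega
    have hf := Nat.choose_mul_factorial_mul_factorial hle
    rw [show 2*k+1 - (2*m+2) = 2*(k-1-m)+1 by omega] at hf
    have hfR : ((2*k+1).choose (2*m+2) : ℝ) * (2*m+2)! * (2*(k-1-m)+1)! = (2*k+1)! := by
      exact_mod_cast congrArg (fun z : ℕ => (z : ℝ)) hf
    rw [div_div, div_eq_div_iff (by positivity) (by positivity)]
    push_cast at hfR ⊢
    nlinarith [hfR]

lemma hasSum_cosh_sub_one (t : ℝ) :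
    HasSum (fun m : ℕ => t ^ (2*m+2) / (2*m+2)!) (Real.cosh t - 1) := by
  have h2 : HasSum (fun n : ℕ => t ^ (2*(n+1)) / (2*(n+1))!) (Real.cosh t - 1) := by
    refine (hasSum_nat_add_iff (f := fun n : ℕ => t ^ (2*n) / (2*n)!) 1).mpr ?_
    simpa using Real.hasSum_cosh t
  refine h2.congr_fun fun n => ?_
  norm_num [Nat.mul_succ]

lemma hasSum_Shi {y : ℝ} (hy : 0 < y) :
    HasSum (fun m : ℕ => y ^ (2*m+1) / (((2*m+1) * (2*m+1)! : ℕ) : ℝ))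
      (∫ t in (0:ℝ)..y, Real.sinh t / t) := by
  have hint : ∀ m : ℕ, ∫ t in Set.Ioc (0:ℝ) y, t ^ (2*m) / ((2*m+1)! : ℝ)
      = y ^ (2*m+1) / (((2*m+1) * (2*m+1)! : ℕ) : ℝ) := by
    intro m
    rw [← intervalIntegral.integral_of_le hy.le]
    rw [intervalIntegral.integral_div, integral_pow]
    push_cast
    rw [zero_pow (by omega)]
    have h1 : ((2*m+1)! : ℝ) ≠ 0 := by positivity
    have h2 : (2*(m:ℝ)+1) ≠ 0 := by positivity
    field_simp
    rw [sub_zero]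
  have hFint : ∀ m : ℕ, Integrable (fun t : ℝ => t ^ (2*m) / ((2*m+1)! : ℝ))
      (volume.restrict (Set.Ioc (0:ℝ) y)) := fun m =>
    ((continuous_pow _).div_const _).integrableOn_Ioc
  have hnorm : ∀ m : ℕ, ∫ t in Set.Ioc (0:ℝ) y, ‖t ^ (2*m) / ((2*m+1)! : ℝ)‖
      = y ^ (2*m+1) / (((2*m+1) * (2*m+1)! : ℕ) : ℝ) := by
    intro m
    rw [← hint m]
    congr 1
    funext t
    rw [Real.norm_eq_abs, abs_of_nonneg (div_nonneg
      (by rw [pow_mul]; exact pow_nonneg (sq_nonneg t) m) (by positivity))]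
  have hsummable : Summable (fun m : ℕ => y ^ (2*m+1) / (((2*m+1) * (2*m+1)! : ℕ) : ℝ)) := by
    refine Summable.of_nonneg_of_le (fun m => by positivity) (fun m => ?_)
      (Real.hasSum_sinh y).summable
    have hle : ((2*m+1)! : ℝ) ≤ (((2*m+1) * (2*m+1)! : ℕ) : ℝ) := by
      exact_mod_cast Nat.le_mul_of_pos_left _ (by omega)
    exact div_le_div_of_nonneg_left (by positivity)
      (by exact_mod_cast Nat.factorial_pos (2*m+1)) hle
  have hs := MeasureTheory.hasSum_integral_of_summable_integral_norm
    (F := fun (m : ℕ) (t : ℝ) => t ^ (2*m) / ((2*m+1)! : ℝ))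
    (μ := volume.restrict (Set.Ioc (0:ℝ) y)) hFint ?_
  · have heq : ∫ t in Set.Ioc (0:ℝ) y, (∑' m : ℕ, t ^ (2*m) / ((2*m+1)! : ℝ))
        = ∫ t in (0:ℝ)..y, Real.sinh t / t := by
      rw [intervalIntegral.integral_of_le hy.le]
      apply MeasureTheory.setIntegral_congr_fun measurableSet_Ioc
      intro t ht
      have ht0 : t ≠ 0 := ne_of_gt ht.1
      have : HasSum (fun m : ℕ => t ^ (2*m) / ((2*m+1)! : ℝ)) (Real.sinh t / t) := by
        refine ((Real.hasSum_sinh t).div_const t).congr_fun fun m => ?_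
        rw [pow_succ]
        field_simp
      exact this.tsum_eq
    rw [heq] at hs
    refine hs.congr_fun fun m => (hint m).symm
  · refine hsummable.congr fun m => ?_
    rw [hnorm m]

lemma hasSum_Chi_int {y : ℝ} (hy : 0 < y) :
    HasSum (fun m : ℕ => y ^ (2*m+2) / (((2*m+2) * (2*m+2)! : ℕ) : ℝ))
      (∫ t in (0:ℝ)..y, (Real.cosh t - 1) / t) := by
  have hint : ∀ m : ℕ, ∫ t in Set.Ioc (0:ℝ) y, t ^ (2*m+1) / ((2*m+2)! : ℝ)
      = y ^ (2*m+2) / (((2*m+2) * (2*m+2)! : ℕ) : ℝ) := by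
    intro m
    rw [← intervalIntegral.integral_of_le hy.le]
    rw [intervalIntegral.integral_div, integral_pow]
    push_cast
    rw [zero_pow (by omega)]
    have h1 : ((2*m+2)! : ℝ) ≠ 0 := by positivity
    have h2 : (2*(m:ℝ)+2) ≠ 0 := by positivity
    rw [sub_zero, show 2*m+1+1 = 2*m+2 by omega]
    rw [div_div, div_eq_div_iff (by positivity) (by positivity)]
    push_cast
    ring
  have hFint : ∀ m : ℕ, Integrable (fun t : ℝ => t ^ (2*m+1) / ((2*m+2)! : ℝ))
      (volume.restrict (Set.Ioc (0:ℝ) y)) := fun m =>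
    ((continuous_pow _).div_const _).integrableOn_Ioc
  have hnorm : ∀ m : ℕ, ∫ t in Set.Ioc (0:ℝ) y, ‖t ^ (2*m+1) / ((2*m+2)! : ℝ)‖
      = y ^ (2*m+2) / (((2*m+2) * (2*m+2)! : ℕ) : ℝ) := by
    intro m
    rw [← hint m]
    apply MeasureTheory.setIntegral_congr_fun measurableSet_Ioc
    intro t ht
    show ‖t ^ (2*m+1) / ((2*m+2)! : ℝ)‖ = t ^ (2*m+1) / ((2*m+2)! : ℝ)
    rw [Real.norm_eq_abs, abs_of_nonneg
      (div_nonneg (pow_nonneg ht.1.le _) (by positivity))]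
  have hsummable : Summable (fun m : ℕ => y ^ (2*m+2) / (((2*m+2) * (2*m+2)! : ℕ) : ℝ)) := by
    refine Summable.of_nonneg_of_le (fun m => by positivity) (fun m => ?_)
      (hasSum_cosh_sub_one y).summable
    have hle : ((2*m+2)! : ℝ) ≤ (((2*m+2) * (2*m+2)! : ℕ) : ℝ) := by
      exact_mod_cast Nat.le_mul_of_pos_left _ (by omega)
    exact div_le_div_of_nonneg_left (by positivity)
      (by exact_mod_cast Nat.factorial_pos (2*m+2)) hle
  have hs := MeasureTheory.hasSum_integral_of_summable_integral_norm
    (F := fun (m : ℕ) (t : ℝ) => t ^ (2*m+1) / ((2*m+2)! : ℝ))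
    (μ := volume.restrict (Set.Ioc (0:ℝ) y)) hFint ?_
  · have heq : ∫ t in Set.Ioc (0:ℝ) y, (∑' m : ℕ, t ^ (2*m+1) / ((2*m+2)! : ℝ))
        = ∫ t in (0:ℝ)..y, (Real.cosh t - 1) / t := by
      rw [intervalIntegral.integral_of_le hy.le]
      apply MeasureTheory.setIntegral_congr_fun measurableSet_Ioc
      intro t ht
      have ht0 : t ≠ 0 := ne_of_gt ht.1
      have : HasSum (fun m : ℕ => t ^ (2*m+1) / ((2*m+2)! : ℝ)) ((Real.cosh t - 1) / t) := by
        refine ((hasSum_cosh_sub_one t).div_const t).congr_fun fun m => ?_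
        rw [pow_succ]
        field_simp
        ring
      exact this.tsum_eq
    rw [heq] at hs
    refine hs.congr_fun fun m => (hint m).symm
  · refine hsummable.congr fun m => ?_
    rw [hnorm m]

/-- **Value (2.11)... (2.9)**: for every real `x > 0`,
`−∑_{k=1}^∞ ψ(2k) x^k / Γ(2k) = √x [sinh √x (Chi √x − ln √x) − cosh √x · Shi √x]`. -/
theorem integral_mittagLeffler_alpha_deriv_two_zero (x : ℝ) (hx : 0 < x) :
    -∑' k : ℕ, digamma (2 * ((k : ℝ) + 1)) * x ^ (k + 1) / Real.Gamma (2 * ((k : ℝ) + 1)) =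
      Real.sqrt x *
        (Real.sinh (Real.sqrt x) * (Chi (Real.sqrt x) - Real.log (Real.sqrt x)) -
          Real.cosh (Real.sqrt x) * Shi (Real.sqrt x)) := by
  set γ := Real.eulerMascheroniConstant with hγdef
  set y := Real.sqrt x with hydef
  have hy : 0 < y := Real.sqrt_pos.mpr hx
  have hy0 : 0 ≤ y := hy.le
  set II : ℝ := ∫ t in (0:ℝ)..y, (Real.cosh t - 1) / t with hIIdef
  -- the four series
  set s : ℕ → ℝ := fun k => y ^ (2*k+1) / ((2*k+1)! : ℝ) with hsdef
  set c : ℕ → ℝ := fun k => y ^ (2*k) / ((2*k)! : ℝ) with hcdef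
  set b : ℕ → ℝ := fun k => y ^ (2*k+1) / (((2*k+1) * (2*k+1)! : ℕ) : ℝ) with hbdef
  set a : ℕ → ℝ := fun k => y ^ (2*k+2) / (((2*k+2) * (2*k+2)! : ℕ) : ℝ) with hadef
  have HS : HasSum s (Real.sinh y) := Real.hasSum_sinh y
  have HC : HasSum c (Real.cosh y) := Real.hasSum_cosh y
  have HB : HasSum b (Shi y) := hasSum_Shi hy
  have HA : HasSum a II := hasSum_Chi_int hy
  -- norm summability
  have hnn : ∀ (f : ℕ → ℝ), (∀ k, 0 ≤ f k) → Summable f → Summable (fun k => ‖f k‖) := by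
    intro f hf hsf
    refine hsf.congr fun k => ?_
    rw [Real.norm_of_nonneg (hf k)]
  have hs' : Summable (fun k => ‖s k‖) :=
    hnn s (fun k => div_nonneg (pow_nonneg hy0 _) (by positivity)) HS.summable
  have hc' : Summable (fun k => ‖c k‖) :=
    hnn c (fun k => div_nonneg (pow_nonneg hy0 _) (by positivity)) HC.summable
  have hb' : Summable (fun k => ‖b k‖) :=
    hnn b (fun k => div_nonneg (pow_nonneg hy0 _) (by positivity)) HB.summable
  have ha' : Summable (fun k => ‖a k‖) :=
    hnn a (fun k => div_nonneg (pow_nonneg hy0 _) (by positivity)) HA.summable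
  -- Cauchy products
  set q1 : ℕ → ℝ := fun n => ∑ kl ∈ Finset.HasAntidiagonal.antidiagonal n, c kl.1 * b kl.2 with hq1def
  set q2 : ℕ → ℝ := fun n => ∑ kl ∈ Finset.HasAntidiagonal.antidiagonal n, s kl.1 * a kl.2 with hq2def
  have P1 : HasSum q1 (Real.cosh y * Shi y) := by
    have hsum : Summable q1 :=
      (summable_norm_sum_mul_antidiagonal_of_summable_norm hc' hb').of_norm
    have heq : Real.cosh y * Shi y = ∑' n, q1 n := by
      rw [← HC.tsum_eq, ← HB.tsum_eq]
      exact tsum_mul_tsum_eq_tsum_sum_antidiagonal_of_summable_norm hc' hb'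
    rw [heq]
    exact hsum.hasSum
  have P2 : HasSum q2 (Real.sinh y * II) := by
    have hsum : Summable q2 :=
      (summable_norm_sum_mul_antidiagonal_of_summable_norm hs' ha').of_norm
    have heq : Real.sinh y * II = ∑' n, q2 n := by
      rw [← HS.tsum_eq, ← HA.tsum_eq]
      exact tsum_mul_tsum_eq_tsum_sum_antidiagonal_of_summable_norm hs' ha'
    rw [heq]
    exact hsum.hasSum
  -- shift q2
  set q2' : ℕ → ℝ := fun k => match k with | 0 => 0 | (n+1) => q2 n with hq2'def
  have P2' : HasSum q2' (Real.sinh y * II) := by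
    have h := (hasSum_nat_add_iff (f := q2') 1).mp (by exact P2)
    simp only [Finset.range_one, Finset.sum_singleton] at h
    rwa [show q2' 0 = 0 from rfl, add_zero] at h
  -- total
  have Htot : HasSum (fun k => γ * (y * s k) - (y * q1 k - y * q2' k))
      (γ * (y * Real.sinh y) - (y * (Real.cosh y * Shi y) - y * (Real.sinh y * II))) :=
    ((HS.mul_left y).mul_left γ).sub ((P1.mul_left y).sub (P2'.mul_left y))
  -- termwise identification
  have hterm : ∀ k : ℕ, γ * (y * s k) - (y * q1 k - y * q2' k)
      = (γ - (harmonic (2*k+1) : ℝ)) * (y ^ (2*k+2) / ((2*k+1)! : ℝ)) := by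
    intro k
    have hq1k : q1 k = y ^ (2*k+1)
        * ∑ i ∈ range (k+1), (1:ℝ) / (((2*i)! * ((2*(k-i)+1) * (2*(k-i)+1)!) : ℕ)) := by
      rw [hq1def]
      simp only
      rw [Finset.Nat.sum_antidiagonal_eq_sum_range_succ_mk, Finset.mul_sum]
      apply Finset.sum_congr rfl
      intro i hi
      simp only [Finset.mem_range] at hi
      rw [hcdef, hbdef]
      simp only
      rw [_root_.div_mul_div_comm, ← pow_add, show 2*i + (2*(k-i)+1) = 2*k+1 by omega]
      rw [mul_one_div]
      congr 1
      push_cast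
      ring
    have hq2'k : y * q2' k = y ^ (2*k+2)
        * ∑ i ∈ range k, (1:ℝ) / (((2*i+1)! * ((2*(k-1-i)+2) * (2*(k-1-i)+2)!) : ℕ)) := by
      match k with
      | 0 => simp [hq2'def]
      | (n+1) =>
        show y * q2 n = _
        rw [hq2def]
        simp only
        rw [Finset.Nat.sum_antidiagonal_eq_sum_range_succ_mk, Finset.mul_sum, Finset.mul_sum]
        apply Finset.sum_congr rfl
        intro i hi
        simp only [Finset.mem_range] at hi
        rw [hsdef, hadef]
        simp only
        have e : y ^ (2*(n+1)+2) = y * (y^(2*i+1) * y^(2*(n-i)+2)) := by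
          rw [← pow_add, show 2*i+1+(2*(n-i)+2) = 2*n+3 by omega,
            show 2*(n+1)+2 = (2*n+3)+1 by omega]
          exact _root_.pow_succ' y (2*n+3)
        rw [e, show n+1-1-i = n-i by omega]
        simp only [Nat.cast_mul]
        ring
    have hDE := key_comb k
    have hq1k' : y * q1 k = y ^ (2*k+2)
        * ∑ i ∈ range (k+1), (1:ℝ) / (((2*i)! * ((2*(k-i)+1) * (2*(k-i)+1)!) : ℕ)) := by
      rw [hq1k, ← mul_assoc]
      congr 1
      rw [show 2*k+2 = (2*k+1)+1 by omega]
      exact (_root_.pow_succ' y (2*k+1)).symm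
    rw [hq1k', hq2'k, ← mul_sub, hDE]
    rw [hsdef]
    simp only
    have e : y * (y ^ (2*k+1) / ((2*k+1)! : ℝ)) = y ^ (2*k+2) / ((2*k+1)! : ℝ) := by
      rw [show 2*k+2 = (2*k+1)+1 by omega, _root_.pow_succ']
      ring
    rw [e]
    ring
  have Hfinal : HasSum (fun k => (γ - (harmonic (2*k+1) : ℝ)) * (y ^ (2*k+2) / ((2*k+1)! : ℝ)))
      (γ * (y * Real.sinh y) - (y * (Real.cosh y * Shi y) - y * (Real.sinh y * II))) := by
    refine Htot.congr_fun fun k => ?_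
    rw [hterm k]
  -- identify the LHS series
  have hLHS : (fun k : ℕ => digamma (2 * ((k : ℝ) + 1)) * x ^ (k + 1) / Real.Gamma (2 * ((k : ℝ) + 1)))
      = fun k => -((γ - (harmonic (2*k+1) : ℝ)) * (y ^ (2*k+2) / ((2*k+1)! : ℝ))) := by
    funext k
    have harg : 2 * ((k : ℝ) + 1) = ((2*k+1 : ℕ) : ℝ) + 1 := by push_cast; ring
    have hGamma : Real.Gamma (2 * ((k : ℝ) + 1)) = ((2*k+1)! : ℝ) := by
      rw [harg, Real.Gamma_nat_eq_factorial]
    have hderiv : deriv Real.Gamma (2 * ((k : ℝ) + 1))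
        = ((2*k+1)! : ℝ) * (-γ + (harmonic (2*k+1) : ℝ)) := by
      rw [harg, Real.deriv_Gamma_nat]
    have hfac : ((2*k+1)! : ℝ) ≠ 0 := by positivity
    have hdig : digamma (2 * ((k : ℝ) + 1)) = -γ + (harmonic (2*k+1) : ℝ) := by
      rw [digamma, hderiv, hGamma, mul_div_cancel_left₀ _ hfac]
    have hxpow : x ^ (k+1) = y ^ (2*k+2) := by
      have hx2 : x = y ^ 2 := (Real.sq_sqrt hx.le).symm
      rw [hx2, ← pow_mul, show 2*(k+1) = 2*k+2 by omega]
    rw [hdig, hGamma, hxpow]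
    ring
  rw [hLHS, tsum_neg, neg_neg, Hfinal.tsum_eq]
  -- finally, identify the RHS
  have hChi : Chi y - Real.log y = γ + II := by
    rw [Chi, hIIdef]
    have : (∫ t in (0:ℝ)..y, (1 - Real.cosh t) / t)
        = -∫ t in (0:ℝ)..y, (Real.cosh t - 1) / t := by
      rw [← intervalIntegral.integral_neg]
      congr 1
      funext t
      ring
    rw [this]
    ring
  rw [hChi]
  ring
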